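/- arXiv:1402.4594 — 2 statements merged into one kernel-verified Lean document; each statement's English description precedes it below -/
import Mathlib

section
/- Let G ≤ GL_{n-1}(F_2) be the subgroup generated by the permutation matrices of S_{n-1} (permuting the basis x_1,...,x_{n-1}) together with the map σ defined by σ(x_i) = x_{i+1} for i < n-1 and σ(x_{n-1}) = x_1 + ... + x_{n-1}. Then the cosets S_{n-1}, S_{n-1}σ, S_{n-1}σ^2, ..., S_{n-1}σ^{n-1} are pairwise disjoint, so |G| ≥ n!. -/
/-- The linear map `σ` on `F_2^d` (basis `x_1, …, x_d`) with `σ(x_i) = x_{i+1}`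
for `i < d` and `σ(x_d) = x_1 + ⋯ + x_d`, in coordinates; and the associated
linear automorphism `sigEquiv`. -/
def sigMap (d : ℕ) : (Fin d → ZMod 2) →ₗ[ZMod 2] (Fin d → ZMod 2) where
  toFun v := fun j =>
    (if (j : ℕ) = 0 then 0 else v ⟨(j : ℕ) - 1, lt_of_le_of_lt (Nat.sub_le _ _) j.isLt⟩) +
      v ⟨d - 1, Nat.sub_lt j.pos Nat.one_pos⟩
  map_add' u v := by
    funext j
    by_cases h : (j : ℕ) = 0 <;> simp [h, Pi.add_apply] <;> ring
  map_smul' c v := by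
    funext j
    by_cases h : (j : ℕ) = 0 <;> simp [h, Pi.smul_apply] <;> ring

noncomputable def sigEquiv (d : ℕ) : (Fin d → ZMod 2) ≃ₗ[ZMod 2] (Fin d → ZMod 2) :=
  LinearEquiv.ofBijective (sigMap d) (by
    have hinj : Function.Injective (sigMap d) := by
      rw [← LinearMap.ker_eq_bot, LinearMap.ker_eq_bot']
      intro v hv
      funext i
      have hl : v ⟨d - 1, Nat.sub_lt i.pos Nat.one_pos⟩ = 0 := by
        have := congrFun hv ⟨0, i.pos⟩
        simpa [sigMap] using this
      rcases eq_or_ne (i : ℕ) (d - 1) with h | h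
      · have hi : i = ⟨d - 1, Nat.sub_lt i.pos Nat.one_pos⟩ := Fin.ext (by simpa using h)
        rw [hi, hl]; rfl
      · have hi1 : (i : ℕ) + 1 < d := by omega
        have h2 := congrFun hv ⟨(i : ℕ) + 1, hi1⟩
        have h3 : (⟨(i : ℕ) + 1 - 1, lt_of_le_of_lt (Nat.sub_le _ _) hi1⟩ : Fin d) = i :=
          Fin.ext (by simp)
        simp [sigMap, hl, h3] at h2
        simpa using h2
    exact ⟨hinj, Finite.surjective_of_injective hinj⟩)


/-- The permutation matrices: automorphisms of `F_2^d` induced by permuting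
the basis `x_1, …, x_d`. -/
def permSubset (d : ℕ) : Set ((Fin d → ZMod 2) ≃ₗ[ZMod 2] (Fin d → ZMod 2)) :=
  Set.range fun τ : Equiv.Perm (Fin d) =>
    LinearEquiv.funCongrLeft (ZMod 2) (ZMod 2) τ

-- apply lemma for sigEquiv
lemma sigEquiv_apply (d : ℕ) (v : Fin d → ZMod 2) (j : Fin d) :
    sigEquiv d v j =
      (if (j : ℕ) = 0 then 0 else v ⟨(j : ℕ) - 1, lt_of_le_of_lt (Nat.sub_le _ _) j.isLt⟩) +
        v ⟨d - 1, Nat.sub_lt j.pos Nat.one_pos⟩ := rfl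

lemma sig_single (d : ℕ) (i : ℕ) (h : i + 1 < d) :
    sigEquiv d (Pi.single (⟨i, by omega⟩ : Fin d) 1) = Pi.single (⟨i + 1, h⟩ : Fin d) 1 := by
  funext j
  rw [sigEquiv_apply]
  simp only [Pi.single_apply, Fin.ext_iff, Fin.val_mk]
  split_ifs <;> first | decide | omega | (exfalso; omega)

lemma sig_last (d : ℕ) (hd : 1 ≤ d) :
    sigEquiv d (Pi.single (⟨d - 1, by omega⟩ : Fin d) 1) = fun _ => 1 := by
  funext j
  rw [sigEquiv_apply]
  simp only [Pi.single_apply, Fin.ext_iff, Fin.val_mk]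
  have := j.isLt
  split_ifs <;> first | decide | omega | (exfalso; omega)

lemma sig_shift (d : ℕ) (m : ℕ) : ∀ (i : ℕ) (h : i + m < d),
    (sigEquiv d ^ m) (Pi.single (⟨i, by omega⟩ : Fin d) 1) =
      Pi.single (⟨i + m, h⟩ : Fin d) 1 := by
  induction m with
  | zero => intro i h; simp
  | succ m ih =>
    intro i h
    rw [pow_succ]
    have h2 : (sigEquiv d ^ m * sigEquiv d) (Pi.single (⟨i, by omega⟩ : Fin d) 1)
        = (sigEquiv d ^ m) (sigEquiv d (Pi.single (⟨i, by omega⟩ : Fin d) 1)) := rfl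
    rw [h2, sig_single d i (by omega), ih (i + 1) (by omega)]
    have h4 : (⟨i + 1 + m, by omega⟩ : Fin d) = (⟨i + (m + 1), h⟩ : Fin d) :=
      Fin.ext (by simp; omega)
    rw [h4]

lemma sig_pow_ones (d m : ℕ) (h1 : 1 ≤ m) (h2 : m ≤ d) :
    (sigEquiv d ^ m) (Pi.single (⟨d - m, by omega⟩ : Fin d) 1) = fun _ => 1 := by
  obtain ⟨m, rfl⟩ : ∃ k, m = k + 1 := ⟨m - 1, by omega⟩
  rw [pow_succ']
  have h3 : (sigEquiv d * sigEquiv d ^ m) (Pi.single (⟨d - (m+1), by omega⟩ : Fin d) 1)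
      = (sigEquiv d) ((sigEquiv d ^ m) (Pi.single (⟨d - (m+1), by omega⟩ : Fin d) 1)) := rfl
  rw [h3, sig_shift d m (d - (m+1)) (by omega)]
  have he : (⟨d - (m+1) + m, by omega⟩ : Fin d) = ⟨d - 1, by omega⟩ := by
    apply Fin.ext; simp; omega
  rw [he, sig_last d (by omega)]

lemma funCongrLeft_mul (d : ℕ) (τ₁ τ₂ : Equiv.Perm (Fin d)) :
    LinearEquiv.funCongrLeft (ZMod 2) (ZMod 2) τ₁ * LinearEquiv.funCongrLeft (ZMod 2) (ZMod 2) τ₂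
      = LinearEquiv.funCongrLeft (ZMod 2) (ZMod 2) (τ₁.trans τ₂) := rfl

lemma funCongrLeft_one (d : ℕ) :
    LinearEquiv.funCongrLeft (ZMod 2) (ZMod 2) (Equiv.refl (Fin d)) = 1 := rfl

lemma perm_mul_mem (d : ℕ) {a b : (Fin d → ZMod 2) ≃ₗ[ZMod 2] (Fin d → ZMod 2)}
    (ha : a ∈ permSubset d) (hb : b ∈ permSubset d) : a * b ∈ permSubset d := by
  obtain ⟨τ₁, rfl⟩ := ha
  obtain ⟨τ₂, rfl⟩ := hb
  exact ⟨τ₁.trans τ₂, (funCongrLeft_mul d τ₁ τ₂).symm⟩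

lemma perm_inv_mem (d : ℕ) {a : (Fin d → ZMod 2) ≃ₗ[ZMod 2] (Fin d → ZMod 2)}
    (ha : a ∈ permSubset d) : a⁻¹ ∈ permSubset d := by
  obtain ⟨τ, rfl⟩ := ha
  refine ⟨τ.symm, ?_⟩
  have h : LinearEquiv.funCongrLeft (ZMod 2) (ZMod 2) τ.symm *
      LinearEquiv.funCongrLeft (ZMod 2) (ZMod 2) τ = 1 := by
    rw [funCongrLeft_mul]
    rw [show τ.symm.trans τ = Equiv.refl (Fin d) from by ext x; simp]
    exact funCongrLeft_one d
  exact (eq_inv_of_mul_eq_one_left h).symm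

lemma sig_pow_not_perm (d m : ℕ) (hd : 2 ≤ d) (h1 : 1 ≤ m) (h2 : m ≤ d) :
    sigEquiv d ^ m ∉ permSubset d := by
  rintro ⟨τ, hτ⟩
  have hfun : (sigEquiv d ^ m) (Pi.single (⟨d - m, by omega⟩ : Fin d) 1) =
      fun j => (Pi.single (⟨d - m, by omega⟩ : Fin d) 1 : Fin d → ZMod 2) (τ j) := by
    rw [← hτ]; rfl
  rw [sig_pow_ones d m h1 h2] at hfun
  have h0 := congrFun hfun ⟨0, by omega⟩
  have h1' := congrFun hfun ⟨1, by omega⟩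
  have key : ∀ j : Fin d, (1 : ZMod 2) =
      (Pi.single (⟨d - m, by omega⟩ : Fin d) 1 : Fin d → ZMod 2) (τ j) → τ j = ⟨d - m, by omega⟩ := by
    intro j hj
    by_contra hne
    rw [Pi.single_apply, if_neg hne] at hj
    exact one_ne_zero hj
  have e0 := key _ h0
  have e1 := key _ h1'
  have : (⟨0, by omega⟩ : Fin d) = ⟨1, by omega⟩ := τ.injective (e0.trans e1.symm)
  simp [Fin.ext_iff] at this

lemma funCongrLeft_inj (d : ℕ) {τ₁ τ₂ : Equiv.Perm (Fin d)}
    (h : LinearEquiv.funCongrLeft (ZMod 2) (ZMod 2) τ₁ =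
      LinearEquiv.funCongrLeft (ZMod 2) (ZMod 2) τ₂) : τ₁ = τ₂ := by
  ext j
  have h2 : (Pi.single (τ₁ j) 1 : Fin d → ZMod 2) (τ₁ j) =
      (Pi.single (τ₁ j) 1 : Fin d → ZMod 2) (τ₂ j) :=
    congrFun (congrArg (fun e => e (Pi.single (τ₁ j) 1 : Fin d → ZMod 2)) h) j
  rw [Pi.single_apply, Pi.single_apply, if_pos rfl] at h2
  by_contra hne
  rw [if_neg (fun hh => hne (congrArg Fin.val hh.symm))] at h2
  exact one_ne_zero h2

lemma coset_false (d : ℕ) (hd : 2 ≤ d) {i k : ℕ} (hik : i < k) (hk : k ≤ d)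
    {P Q : (Fin d → ZMod 2) ≃ₗ[ZMod 2] (Fin d → ZMod 2)}
    (hP : P ∈ permSubset d) (hQ : Q ∈ permSubset d)
    (h : P * sigEquiv d ^ i = Q * sigEquiv d ^ k) : False := by
  have hk' : sigEquiv d ^ k = sigEquiv d ^ (k - i) * sigEquiv d ^ i := by
    rw [← pow_add]; congr 1; omega
  have h2 : P = Q * sigEquiv d ^ (k - i) := by
    apply mul_right_cancel (b := sigEquiv d ^ i)
    rw [h, hk', mul_assoc]
  have h3 : Q⁻¹ * P = sigEquiv d ^ (k - i) := inv_mul_eq_iff_eq_mul.mpr h2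
  exact sig_pow_not_perm d (k - i) hd (by omega) (by omega)
    (h3 ▸ perm_mul_mem d (perm_inv_mem d hQ) hP)

instance instFinLE (d : ℕ) : Finite ((Fin d → ZMod 2) ≃ₗ[ZMod 2] (Fin d → ZMod 2)) :=
  Finite.of_injective (fun e => (e : (Fin d → ZMod 2) → Fin d → ZMod 2)) DFunLike.coe_injective


/-- For `n ≥ 3`, the cosets `S_{n-1} σ^i`, `0 ≤ i ≤ n-1`, inside
`GL_{n-1}(F_2)` are pairwise disjoint, so the subgroup generated by the
permutation matrices `S_{n-1}` together with `σ` has order at least `n!`. -/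
theorem stmt3 (n : ℕ) (hn : 3 ≤ n) :
    (∀ i k : ℕ, i ≤ n - 1 → k ≤ n - 1 → i ≠ k →
      Disjoint ((fun g => g * sigEquiv (n - 1) ^ i) '' permSubset (n - 1))
        ((fun g => g * sigEquiv (n - 1) ^ k) '' permSubset (n - 1))) ∧
    Nat.factorial n ≤
      Nat.card (Subgroup.closure (permSubset (n - 1) ∪ {sigEquiv (n - 1)})) := by
  have hd : 2 ≤ n - 1 := by omega
  have hdisj : ∀ i k : ℕ, i ≤ n - 1 → k ≤ n - 1 → i ≠ k →
      Disjoint ((fun g => g * sigEquiv (n - 1) ^ i) '' permSubset (n - 1))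
        ((fun g => g * sigEquiv (n - 1) ^ k) '' permSubset (n - 1)) := by
    intro i k hi hk hik
    rw [Set.disjoint_left]
    rintro x ⟨P, hP, rfl⟩ ⟨Q, hQ, hEq⟩
    rcases lt_or_gt_of_ne hik with h | h
    · exact coset_false (n - 1) hd h hk hP hQ hEq.symm
    · exact coset_false (n - 1) hd h hi hQ hP hEq
  refine ⟨hdisj, ?_⟩
  set H := Subgroup.closure (permSubset (n - 1) ∪ {sigEquiv (n - 1)}) with hH
  have hσ : sigEquiv (n - 1) ∈ H := Subgroup.subset_closure (Or.inr rfl)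
  have hmem : ∀ p : Equiv.Perm (Fin (n - 1)) × Fin n,
      LinearEquiv.funCongrLeft (ZMod 2) (ZMod 2) p.1 * sigEquiv (n - 1) ^ (p.2 : ℕ) ∈ H := by
    intro p
    exact H.mul_mem (Subgroup.subset_closure (Or.inl ⟨p.1, rfl⟩)) (H.pow_mem hσ _)
  let f : Equiv.Perm (Fin (n - 1)) × Fin n → H := fun p =>
    ⟨LinearEquiv.funCongrLeft (ZMod 2) (ZMod 2) p.1 * sigEquiv (n - 1) ^ (p.2 : ℕ), hmem p⟩
  have hinj : Function.Injective f := by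
    rintro ⟨τ₁, i⟩ ⟨τ₂, k⟩ h
    have h' : LinearEquiv.funCongrLeft (ZMod 2) (ZMod 2) τ₁ * sigEquiv (n - 1) ^ (i : ℕ) =
        LinearEquiv.funCongrLeft (ZMod 2) (ZMod 2) τ₂ * sigEquiv (n - 1) ^ (k : ℕ) :=
      congrArg Subtype.val h
    have hik : (i : ℕ) = (k : ℕ) := by
      by_contra hne
      rcases lt_or_gt_of_ne hne with hlt | hlt
      · exact coset_false (n - 1) hd hlt (by omega) ⟨τ₁, rfl⟩ ⟨τ₂, rfl⟩ h'
      · exact coset_false (n - 1) hd hlt (by omega) ⟨τ₂, rfl⟩ ⟨τ₁, rfl⟩ h'.symm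
    have hik' : i = k := Fin.ext hik
    subst hik'
    have hτ : τ₁ = τ₂ := funCongrLeft_inj (n - 1) (mul_right_cancel h')
    rw [hτ]
  have hcard := Nat.card_le_card_of_injective f hinj
  have hcount : Nat.card (Equiv.Perm (Fin (n - 1)) × Fin n) = Nat.factorial n := by
    rw [Nat.card_prod, Nat.card_eq_fintype_card, Nat.card_eq_fintype_card,
      Fintype.card_perm, Fintype.card_fin, Fintype.card_fin]
    obtain ⟨m, rfl⟩ : ∃ m, n = m + 1 := ⟨n - 1, by omega⟩
    simp [Nat.factorial_succ, mul_comm]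
  rw [hcount] at hcard
  exact hcard
end

section
/- The elementary symmetric polynomials of degrees 2 through n in F_2[x_1,...,x_{n-1}], obtained by substituting x_n = x_1 + ... + x_{n-1} into w_2,...,w_n ∈ F_2[x_1,...,x_n], form a homogeneous system of parameters: F_2[x_1,...,x_{n-1}] is a finitely generated module over the subalgebra they generate. -/
set_option maxHeartbeats 1000000
set_option synthInstance.maxHeartbeats 1000000


open MvPolynomial

/-- The substitution `x_i ↦ x_i` for `i < n` and `x_n ↦ x_1 + ⋯ + x_{n-1}`,
as an algebra map `F_2[x_1, …, x_n] → F_2[x_1, …, x_{n-1}]`. -/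
noncomputable def substLast (n : ℕ) :
    MvPolynomial (Fin n) (ZMod 2) →ₐ[ZMod 2] MvPolynomial (Fin (n - 1)) (ZMod 2) :=
  aeval fun i : Fin n =>
    if h : (i : ℕ) < n - 1 then X ⟨(i : ℕ), h⟩ else ∑ j : Fin (n - 1), X j

noncomputable def substV (m : ℕ) : Fin (m + 1) → MvPolynomial (Fin m) (ZMod 2) :=
  fun i => if h : (i : ℕ) < m then X ⟨(i : ℕ), h⟩ else ∑ j : Fin m, X j

lemma substV_castSucc (m : ℕ) (i : Fin m) : substV m i.castSucc = X i := by
  simp only [substV, Fin.coe_castSucc]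
  rw [dif_pos i.isLt]

lemma substV_last (m : ℕ) : substV m (Fin.last m) = ∑ j : Fin m, X j := by
  simp [substV]

lemma substV_esymm (m k : ℕ) :
    aeval (substV m) (esymm (Fin (m + 1)) (ZMod 2) k)
      = (Finset.univ.val.map (substV m)).esymm k :=
  aeval_esymm_eq_multiset_esymm _ _ k _

lemma substV_esymm_one (m : ℕ) :
    aeval (substV m) (esymm (Fin (m + 1)) (ZMod 2) 1) = 0 := by
  rw [esymm_one, map_sum]
  simp only [aeval_X]
  rw [Fin.sum_univ_castSucc]
  simp only [substV_castSucc, substV_last]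
  exact CharTwo.add_self_eq_zero _

lemma key (m : ℕ) (i : Fin m) :
    (X i : MvPolynomial (Fin m) (ZMod 2)) ^ (m + 1) =
      ∑ j ∈ Finset.range m,
        aeval (substV m) (esymm (Fin (m + 1)) (ZMod 2) (j + 2)) * X i ^ (m + 1 - (j + 2)) := by
  have hs : Multiset.card (Finset.univ.val.map (substV m)) = m + 1 := by simp
  have h0 := congrArg (Polynomial.eval (X i : MvPolynomial (Fin m) (ZMod 2)))
    (Multiset.prod_X_add_C_eq_sum_esymm (Finset.univ.val.map (substV m)))
  rw [hs] at h0
  have hL : Polynomial.eval (X i : MvPolynomial (Fin m) (ZMod 2))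
      ((Finset.univ.val.map (substV m)).map fun r => Polynomial.X + Polynomial.C r).prod = 0 := by
    rw [Polynomial.eval_multiset_prod]
    apply Multiset.prod_eq_zero
    rw [Multiset.map_map, Multiset.map_map]
    refine Multiset.mem_map.mpr ⟨Fin.castSucc i, Finset.mem_val.mpr (Finset.mem_univ _), ?_⟩
    simp [substV_castSucc, CharTwo.add_self_eq_zero]
  rw [hL] at h0
  rw [Polynomial.eval_finset_sum] at h0
  simp only [Polynomial.eval_mul, Polynomial.eval_C, Polynomial.eval_pow, Polynomial.eval_X] at h0
  rw [Finset.sum_range_succ', Finset.sum_range_succ'] at h0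
  rw [← substV_esymm, ← substV_esymm, substV_esymm_one] at h0
  have he0 : aeval (substV m) (esymm (Fin (m + 1)) (ZMod 2) 0) = 1 := by
    rw [esymm_zero, map_one]
  rw [he0] at h0
  simp only [zero_mul, add_zero, one_mul, Nat.sub_zero] at h0
  have h1 : (∑ j ∈ Finset.range m,
      (Finset.univ.val.map (substV m)).esymm (j + 1 + 1) * X i ^ (m + 1 - (j + 1 + 1)))
      + X i ^ (m + 1) = 0 := h0.symm
  have h2 := neg_eq_of_add_eq_zero_left h1
  rw [CharTwo.neg_eq] at h2
  rw [h2]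
  refine Finset.sum_congr rfl fun j _ => ?_
  rw [← substV_esymm]

theorem stmt14' (m : ℕ) :
    Module.Finite
      (Algebra.adjoin (ZMod 2)
        (Set.range fun i : Fin m =>
          aeval (substV m) (esymm (Fin (m + 1)) (ZMod 2) ((i : ℕ) + 2))))
      (MvPolynomial (Fin m) (ZMod 2)) := by
  set A := Algebra.adjoin (ZMod 2)
      (Set.range fun i : Fin m =>
        aeval (substV m) (esymm (Fin (m + 1)) (ZMod 2) ((i : ℕ) + 2))) with hA
  have hint : ∀ x ∈ Set.range (X : Fin m → MvPolynomial (Fin m) (ZMod 2)),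
      IsIntegral A x := by
    rintro _ ⟨i, rfl⟩
    set g : Fin m → A := fun j =>
      ⟨aeval (substV m) (esymm (Fin (m + 1)) (ZMod 2) ((j : ℕ) + 2)),
        Algebra.subset_adjoin ⟨j, rfl⟩⟩ with hg
    refine ⟨Polynomial.X ^ (m + 1) +
      ∑ j : Fin m, Polynomial.C (g j) * Polynomial.X ^ (m + 1 - ((j : ℕ) + 2)), ?_, ?_⟩
    · apply Polynomial.monic_X_pow_add
      apply lt_of_le_of_lt (Polynomial.degree_sum_le _ _)
      rw [Finset.sup_lt_iff (by exact_mod_cast WithBot.bot_lt_coe (m + 1))]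
      intro j _
      apply lt_of_le_of_lt (Polynomial.degree_C_mul_X_pow_le _ _)
      exact_mod_cast (by omega : m + 1 - ((j : ℕ) + 2) < m + 1)
    · show Polynomial.aeval (X i : MvPolynomial (Fin m) (ZMod 2)) _ = 0
      simp only [map_add, map_sum, map_mul, map_pow, Polynomial.aeval_X, Polynomial.aeval_C]
      have hsum : (∑ j : Fin m,
          (algebraMap A (MvPolynomial (Fin m) (ZMod 2)) (g j)) * X i ^ (m + 1 - ((j : ℕ) + 2)))
          = X i ^ (m + 1) := by
        rw [key m i, Finset.sum_range]
        rfl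
      rw [hsum]
      exact CharTwo.add_self_eq_zero _
  have h1 : Algebra.adjoin A
      (Set.range (X : Fin m → MvPolynomial (Fin m) (ZMod 2))) = ⊤ := by
    rw [eq_top_iff]
    intro x _
    have h2 : Algebra.adjoin (ZMod 2)
        (Set.range (X : Fin m → MvPolynomial (Fin m) (ZMod 2)))
        ≤ (Algebra.adjoin A (Set.range X)).restrictScalars (ZMod 2) :=
      Algebra.adjoin_le fun y hy => Algebra.subset_adjoin hy
    exact h2 (by rw [MvPolynomial.adjoin_range_X]; trivial)
  have hfg := fg_adjoin_of_finite (Set.finite_range _) hint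
  rw [h1] at hfg
  exact ⟨by rwa [← Algebra.top_toSubmodule]⟩

/-- The images in `F_2[x_1, …, x_{n-1}]` of the elementary symmetric
polynomials `w_2, …, w_n` under the substitution `x_n ↦ x_1 + ⋯ + x_{n-1}`
form a homogeneous system of parameters: `F_2[x_1, …, x_{n-1}]` is a finitely
generated module over the subalgebra they generate. -/
theorem stmt14 (n : ℕ) (hn : 2 ≤ n) :
    Module.Finite
      (Algebra.adjoin (ZMod 2)
        (Set.range fun i : Fin (n - 1) =>
          substLast n (esymm (Fin n) (ZMod 2) ((i : ℕ) + 2))))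
      (MvPolynomial (Fin (n - 1)) (ZMod 2)) := by
  obtain ⟨m, rfl⟩ : ∃ m, n = m + 1 := ⟨n - 1, by omega⟩
  exact stmt14' m
end
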